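/- If n = m ≥ 5, then there is no optimal (n,n)-graph: for every connected finite loopless multigraph G with n vertices and n edges and distinct terminals s,t, there exist a connected finite loopless multigraph H with n vertices and n edges, distinct terminals s',t' of H, and some p ∈ (0,1) with sRel(H,s',t';p) > sRel(G,s,t;p). -/

import Mathlib

/-- A finite loopless multigraph: a finite vertex type `V`, a finite edge type `E`,
and an endpoint map assigning to each edge an unordered pair of distinct vertices. -/
structure Multigraph where
  V : Type
  E : Type
  [fintV : Fintype V]
  [fintE : Fintype E]
  [decV : DecidableEq V]
  [decE : DecidableEq E]
  ends : E → Sym2 V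
  loopless : ∀ e, ¬ (ends e).IsDiag

attribute [instance] Multigraph.fintV Multigraph.fintE Multigraph.decV Multigraph.decE

namespace Multigraph

/-- The simple graph on `G.V` underlying the spanning subgraph of `G` with edge set `E'`. -/
def subgraph (G : Multigraph) (E' : Finset G.E) : SimpleGraph G.V where
  Adj u v := u ≠ v ∧ ∃ e ∈ E', G.ends e = s(u, v)
  symm := by
    refine ⟨?_⟩
    rintro u v ⟨huv, e, he, hends⟩
    exact ⟨huv.symm, e, he, hends.trans (Sym2.eq_swap)⟩
  loopless := by refine ⟨?_⟩; rintro u ⟨h, -⟩; exact h rfl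

/-- The spanning subgraph of `G` with edge set `E'` has exactly two connected components,
one containing `s` and the other containing `t`. -/
def SplitState (G : Multigraph) (s t : G.V) (E' : Finset G.E) : Prop :=
  ¬ (G.subgraph E').Reachable s t ∧
    ∀ v : G.V, (G.subgraph E').Reachable v s ∨ (G.subgraph E').Reachable v t

open scoped Classical in
/-- The split reliability of `G` with terminals `s` and `t`, at edge probability `p`. -/
noncomputable def sRel (G : Multigraph) (s t : G.V) (p : ℝ) : ℝ :=
  ∑ E' : Finset G.E, if G.SplitState s t E' then
    p ^ E'.card * (1 - p) ^ (Fintype.card G.E - E'.card) else 0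

open scoped Classical in
/-- `N_i(G,s,t)`: the number of edge subsets of cardinality `i` whose spanning subgraph has
exactly two connected components, one containing `s` and the other containing `t`. -/
noncomputable def Nst (G : Multigraph) (s t : G.V) (i : ℕ) : ℕ :=
  (Finset.univ.filter fun E' : Finset G.E => E'.card = i ∧ G.SplitState s t E').card

/-- A multigraph is connected when its underlying simple graph is. -/
def Connected (G : Multigraph) : Prop := (G.subgraph Finset.univ).Connected

open scoped Classical in
/-- The all-terminal reliability of `G` at edge probability `p`. -/
noncomputable def Rel (G : Multigraph) (p : ℝ) : ℝ :=
  ∑ E' : Finset G.E, if (G.subgraph E').Connected then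
    p ^ E'.card * (1 - p) ^ (Fintype.card G.E - E'.card) else 0

/-- `G` together with terminals `s ≠ t` is an optimal `(n,m)`-graph for split reliability. -/
def IsOptimal (n m : ℕ) (G : Multigraph) (s t : G.V) : Prop :=
  G.Connected ∧ Fintype.card G.V = n ∧ Fintype.card G.E = m ∧ s ≠ t ∧
    ∀ (H : Multigraph) (s' t' : H.V), H.Connected → Fintype.card H.V = n →
      Fintype.card H.E = m → s' ≠ t' → ∀ p : ℝ, 0 < p → p < 1 →
        H.sRel s' t' p ≤ G.sRel s t p

/-- An isomorphism of multigraphs taking terminals `s,t` of `G` to terminals `u,v` of `H`. -/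
def IsoTerm (G H : Multigraph) (s t : G.V) (u v : H.V) : Prop :=
  ∃ (φ : G.V ≃ H.V) (ψ : G.E ≃ H.E),
    (∀ e, H.ends (ψ e) = (G.ends e).map φ) ∧ φ s = u ∧ φ t = v

end Multigraph

namespace Multigraph

/-- `Gnm n m k`: the multigraph obtained from a path `v_0, v_1, …, v_{n-1}` (terminals
`s = v_0`, `t = v_{n-1}`) by replacing the path edge from `v_k` to `v_{k+1}` by a bundle of
`m - n + 2` parallel edges (so that the graph has `m` edges in total when `m ≥ n - 1`). -/
def Gnm (n m k : ℕ) (hk : k < n - 1) : Multigraph where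
  V := Fin n
  E := Fin m
  ends e :=
    if h : e.val < n - 1 then
      s((⟨e.val, by omega⟩ : Fin n), (⟨e.val + 1, by omega⟩ : Fin n))
    else
      s((⟨k, by omega⟩ : Fin n), (⟨k + 1, by omega⟩ : Fin n))
  loopless e := by
    by_cases h : e.val < n - 1 <;>
      simp [h, Sym2.mk_isDiag_iff, Fin.ext_iff]

/-- The cycle on `n ≥ 2` vertices. -/
def cycleGraph (n : ℕ) (hn : 2 ≤ n) : Multigraph where
  V := Fin n
  E := Fin n
  ends e := s(e, (⟨(e.val + 1) % n, Nat.mod_lt _ (by omega)⟩ : Fin n))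
  loopless e := by
    simp only [Sym2.mk_isDiag_iff, Fin.ext_iff, Fin.val_mk]
    intro hc
    rcases Nat.lt_or_ge (e.val + 1) n with h' | h'
    · rw [Nat.mod_eq_of_lt h'] at hc; omega
    · have he : e.val + 1 = n := by have := e.isLt; omega
      rw [he, Nat.mod_self] at hc
      omega

/-- The multigraph obtained from `G` by adjoining a new vertex (`none`) joined by a single
new edge to the vertex `u` of `G`. -/
def addPendant (G : Multigraph) (u : G.V) : Multigraph where
  V := Option G.V
  E := Option G.E
  ends e := e.elim s(some u, none) (fun e' => (G.ends e').map some)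
  loopless e := by
    cases e with
    | none => simp [Sym2.mk_isDiag_iff]
    | some e' =>
        show ¬ ((G.ends e').map some).IsDiag
        rw [Sym2.isDiag_map (Option.some_injective _)]
        exact G.loopless e'

/-- The disjoint union of two multigraphs. -/
def disjSum (A B : Multigraph) : Multigraph where
  V := A.V ⊕ B.V
  E := A.E ⊕ B.E
  ends := Sum.elim (fun e => (A.ends e).map Sum.inl) (fun e => (B.ends e).map Sum.inr)
  loopless e := by
    cases e with
    | inl e =>
        show ¬ ((A.ends e).map Sum.inl).IsDiag
        rw [Sym2.isDiag_map Sum.inl_injective]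
        exact A.loopless e
    | inr e =>
        show ¬ ((B.ends e).map Sum.inr).IsDiag
        rw [Sym2.isDiag_map Sum.inr_injective]
        exact B.loopless e

/-- The multigraph on three vertices `0, 1, 2` with a bundle of `a` parallel edges between
`0` and `1` and a bundle of `b` parallel edges between `1` and `2`. -/
def doubleBundle (a b : ℕ) : Multigraph where
  V := Fin 3
  E := Fin (a + b)
  ends e := if e.val < a then s((0 : Fin 3), (1 : Fin 3)) else s((1 : Fin 3), (2 : Fin 3))
  loopless e := by
    by_cases h : e.val < a <;> simp [h, Sym2.mk_isDiag_iff]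

/-- The multigraph on three vertices `0, 1, 2` with bundles of `a`, `b`, `c` parallel edges
between `0,1`, between `1,2`, and between `2,0` respectively. -/
def tripleBundle (a b c : ℕ) : Multigraph where
  V := Fin 3
  E := Fin (a + b + c)
  ends e :=
    if e.val < a then s((0 : Fin 3), (1 : Fin 3))
    else if e.val < a + b then s((1 : Fin 3), (2 : Fin 3))
    else s((2 : Fin 3), (0 : Fin 3))
  loopless e := by
    by_cases h : e.val < a
    · simp [h, Sym2.mk_isDiag_iff]
    · by_cases h' : e.val < a + b <;> simp [h, h', Sym2.mk_isDiag_iff]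

/-- The multigraph obtained from a path `v_0, …, v_{n-1}` by replacing the path edge at
position `k₁` by a bundle of `2` parallel edges and the path edge at position `k₂` by a
bundle of `m - n + 1` parallel edges (for `m ≥ n`, `k₁ ≠ k₂`, the graph has `m` edges). -/
def Gnm2 (n m k₁ k₂ : ℕ) (hk₁ : k₁ < n - 1) (hk₂ : k₂ < n - 1) : Multigraph where
  V := Fin n
  E := Fin m
  ends e :=
    if h : e.val < n - 1 then
      s((⟨e.val, by omega⟩ : Fin n), (⟨e.val + 1, by omega⟩ : Fin n))
    else if e.val = n - 1 then
      s((⟨k₁, by omega⟩ : Fin n), (⟨k₁ + 1, by omega⟩ : Fin n))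
    else
      s((⟨k₂, by omega⟩ : Fin n), (⟨k₂ + 1, by omega⟩ : Fin n))
  loopless e := by
    by_cases h : e.val < n - 1
    · simp [h, Sym2.mk_isDiag_iff, Fin.ext_iff]
    · by_cases h' : e.val = n - 1 <;> simp [h, h', Sym2.mk_isDiag_iff, Fin.ext_iff]

/-- The simple graph on `n ≥ 4` vertices consisting of a path `s = v_0, …, v_{n-3} = t` of
length `n - 3` together with two further vertices `v_{n-2}, v_{n-1}` forming a triangle
with `t`. It has `n` vertices and `n` edges. -/
def triGraph (n : ℕ) (hn : 4 ≤ n) : Multigraph where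
  V := Fin n
  E := Fin n
  ends e :=
    if h : e.val < n - 3 then
      s((⟨e.val, by omega⟩ : Fin n), (⟨e.val + 1, by omega⟩ : Fin n))
    else if e.val = n - 3 then
      s((⟨n - 3, by omega⟩ : Fin n), (⟨n - 2, by omega⟩ : Fin n))
    else if e.val = n - 2 then
      s((⟨n - 2, by omega⟩ : Fin n), (⟨n - 1, by omega⟩ : Fin n))
    else
      s((⟨n - 1, by omega⟩ : Fin n), (⟨n - 3, by omega⟩ : Fin n))
  loopless e := by
    by_cases h : e.val < n - 3
    · simp [h, Sym2.mk_isDiag_iff, Fin.ext_iff]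
    · by_cases h' : e.val = n - 3
      · simp only [dif_neg h, if_pos h', Sym2.mk_isDiag_iff, Fin.mk.injEq]; omega
      · by_cases h'' : e.val = n - 2
        · simp only [dif_neg h, if_neg h', if_pos h'', Sym2.mk_isDiag_iff, Fin.mk.injEq]; omega
        · simp only [dif_neg h, if_neg h', if_neg h'', Sym2.mk_isDiag_iff, Fin.mk.injEq]; omega

end Multigraph

namespace Multigraph
variable {G : Multigraph}

lemma reach_invar {V : Type*} {A : SimpleGraph V} {P : V → Prop}
    (h : ∀ u v, A.Adj u v → (P u ↔ P v))
    {a b : V} (hr : A.Reachable a b) : P a ↔ P b := by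
  obtain ⟨w⟩ := hr
  induction w with
  | nil => rfl
  | cons h' _ ih => exact (h _ _ h').trans ih

lemma subgraph_mono {E₁ E₂ : Finset G.E} (h : E₁ ⊆ E₂) :
    G.subgraph E₁ ≤ G.subgraph E₂ := by
  rintro u v ⟨huv, e, he, hends⟩
  exact ⟨huv, e, h he, hends⟩

lemma adj_subgraph_of_ends {E' : Finset G.E} {e : G.E} {x y : G.V}
    (he : e ∈ E') (hxy : G.ends e = s(x, y)) (hne : x ≠ y) :
    (G.subgraph E').Adj x y := ⟨hne, e, he, hxy⟩

lemma ends_ne {e : G.E} {x y : G.V} (hxy : G.ends e = s(x, y)) : x ≠ y := by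
  intro h; exact G.loopless e (by rw [hxy, h]; simp)

/-- Walk decomposition when removing one edge. -/
lemma reach_decomp {E' : Finset G.E} {e : G.E} {x y : G.V}
    (hxy : G.ends e = s(x, y)) {a b : G.V}
    (h : (G.subgraph E').Reachable a b) :
    (G.subgraph (E'.erase e)).Reachable a b ∨
      (((G.subgraph (E'.erase e)).Reachable a x ∨ (G.subgraph (E'.erase e)).Reachable a y) ∧
       ((G.subgraph (E'.erase e)).Reachable b x ∨ (G.subgraph (E'.erase e)).Reachable b y)) := by
  obtain ⟨w⟩ := h
  induction w with
  | nil => exact Or.inl (SimpleGraph.Reachable.refl _)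
  | @cons u v b hadj w ih =>
    obtain ⟨huv, e', he', hends⟩ := hadj
    by_cases hee : e' = e
    · subst hee
      have hsym : s(u, v) = s(x, y) := hends ▸ hxy
      have hxyuv : (u = x ∧ v = y) ∨ (u = y ∧ v = x) := by
        rwa [Sym2.eq_iff] at hsym
      have hbpart : (G.subgraph (E'.erase e')).Reachable b x ∨
          (G.subgraph (E'.erase e')).Reachable b y := by
        rcases ih with hvb | ⟨_, hb⟩
        · rcases hxyuv with ⟨_, rfl⟩ | ⟨_, rfl⟩
          · exact Or.inr hvb.symm
          · exact Or.inl hvb.symm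
        · exact hb
      refine Or.inr ⟨?_, hbpart⟩
      rcases hxyuv with ⟨rfl, _⟩ | ⟨rfl, _⟩
      · exact Or.inl (SimpleGraph.Reachable.refl _)
      · exact Or.inr (SimpleGraph.Reachable.refl _)
    · have hadj' : (G.subgraph (E'.erase e)).Adj u v :=
        ⟨huv, e', Finset.mem_erase.mpr ⟨hee, he'⟩, hends⟩
      rcases ih with hvb | ⟨hv, hb⟩
      · exact Or.inl (hadj'.reachable.trans hvb)
      · refine Or.inr ⟨?_, hb⟩
        rcases hv with hv | hv
        · exact Or.inl (hadj'.reachable.trans hv)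
        · exact Or.inr (hadj'.reachable.trans hv)


lemma reach_empty_eq {a b : G.V} (h : (G.subgraph (∅ : Finset G.E)).Reachable a b) :
    a = b := by
  have := reach_invar (A := G.subgraph (∅ : Finset G.E)) (P := fun w => w = b)
    (by rintro u v ⟨_, e, he, _⟩; exact absurd he (Finset.notMem_empty e)) h
  simpa using this

lemma roots_bound (E' : Finset G.E) (S : Finset G.V)
    (hcov : ∀ v, ∃ r ∈ S, (G.subgraph E').Reachable v r) :
    Fintype.card G.V ≤ E'.card + S.card := by
  induction E' using Finset.strongInduction generalizing S with
  | _ E' ih =>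
  rcases Finset.eq_empty_or_nonempty E' with rfl | ⟨e, he⟩
  · have hsub : (Finset.univ : Finset G.V) ⊆ S := by
      intro v _
      obtain ⟨r, hrS, hvr⟩ := hcov v
      rwa [reach_empty_eq hvr]
    rw [Finset.card_empty, zero_add, ← Finset.card_univ]
    exact Finset.card_le_card hsub
  · obtain ⟨x, y, hxy⟩ : ∃ x y, G.ends e = s(x, y) := by
      obtain ⟨⟨x, y⟩, h⟩ := (G.ends e).exists_rep
      exact ⟨x, y, h.symm⟩
    have hlt : E'.erase e ⊂ E' := Finset.erase_ssubset he
    have hcard : (E'.erase e).card + 1 = E'.card := by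
      rw [Finset.card_erase_of_mem he]
      have : 1 ≤ E'.card := Finset.card_pos.mpr ⟨e, he⟩
      omega
    have key : ∀ x y : G.V, G.ends e = s(x, y) →
        (∃ r ∈ S, (G.subgraph (E'.erase e)).Reachable r x) →
        Fintype.card G.V ≤ E'.card + S.card := by
      intro x y hxy ⟨r₀, hr₀S, hr₀x⟩
      have hcov' : ∀ v, ∃ r ∈ insert y S, (G.subgraph (E'.erase e)).Reachable v r := by
        intro v
        obtain ⟨r, hrS, hvr⟩ := hcov v
        rcases reach_decomp hxy hvr with hd | ⟨hv, _⟩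
        · exact ⟨r, Finset.mem_insert_of_mem hrS, hd⟩
        · rcases hv with hv | hv
          · exact ⟨r₀, Finset.mem_insert_of_mem hr₀S, hv.trans hr₀x.symm⟩
          · exact ⟨y, Finset.mem_insert_self _ _, hv⟩
      have := ih (E'.erase e) hlt (insert y S) hcov'
      have hins : (insert y S).card ≤ S.card + 1 := Finset.card_insert_le _ _
      omega
    obtain ⟨r₀, hr₀S, hxr₀⟩ := hcov x
    rcases reach_decomp hxy hxr₀ with hd | ⟨_, hr₀⟩
    · exact key x y hxy ⟨r₀, hr₀S, hd.symm⟩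
    · rcases hr₀ with h' | h'
      · exact key x y hxy ⟨r₀, hr₀S, h'⟩
      · exact key y x (hxy.trans Sym2.eq_swap) ⟨r₀, hr₀S, h'⟩

lemma split_card {n : ℕ} (hn : 5 ≤ n) (hG : G.Connected)
    (hV : Fintype.card G.V = n) (hE : Fintype.card G.E = n)
    {s t : G.V} {E' : Finset G.E} (hsp : G.SplitState s t E') :
    E'.card = n - 2 ∨ E'.card = n - 1 := by
  have hlow : n ≤ E'.card + 2 := by
    have := roots_bound E' (insert t {s}) (fun v => by
      rcases hsp.2 v with h | h
      · exact ⟨s, by simp, h⟩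
      · exact ⟨t, by simp, h⟩)
    have hc : (insert t ({s} : Finset G.V)).card ≤ 2 := by
      refine le_trans (Finset.card_insert_le _ _) ?_
      simp
    omega
  have hub : E'.card ≤ n := hE ▸ (Finset.card_le_univ E')
  have hne : E'.card ≠ n := by
    intro h
    have : E' = Finset.univ := Finset.eq_univ_of_card E' (h.trans hE.symm)
    subst this
    exact hsp.1 (hG.preconnected s t)
  omega

open scoped Classical in
lemma sRel_eq {n : ℕ} (hn : 5 ≤ n) (hG : G.Connected)
    (hV : Fintype.card G.V = n) (hE : Fintype.card G.E = n)
    (s t : G.V) (p : ℝ) :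
    G.sRel s t p = (G.Nst s t (n - 2) : ℝ) * (p ^ (n - 2) * (1 - p) ^ 2)
      + (G.Nst s t (n - 1) : ℝ) * (p ^ (n - 1) * (1 - p) ^ 1) := by
  classical
  have hsupp : ∀ E' : Finset G.E, G.SplitState s t E' → E'.card = n - 2 ∨ E'.card = n - 1 :=
    fun E' h => split_card hn hG hV hE h
  unfold sRel Nst
  rw [hE, ← Finset.sum_filter]
  have hsplitset : (Finset.univ.filter fun E' : Finset G.E => G.SplitState s t E')
      = (Finset.univ.filter fun E' : Finset G.E => E'.card = n - 2 ∧ G.SplitState s t E')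
        ∪ (Finset.univ.filter fun E' : Finset G.E => E'.card = n - 1 ∧ G.SplitState s t E') := by
    ext E'
    simp only [Finset.mem_filter, Finset.mem_union, Finset.mem_univ, true_and]
    constructor
    · intro h
      rcases hsupp E' h with h2 | h2
      · exact Or.inl ⟨h2, h⟩
      · exact Or.inr ⟨h2, h⟩
    · rintro (⟨_, h⟩ | ⟨_, h⟩) <;> exact h
  have hdisj : Disjoint
      (Finset.univ.filter fun E' : Finset G.E => E'.card = n - 2 ∧ G.SplitState s t E')
      (Finset.univ.filter fun E' : Finset G.E => E'.card = n - 1 ∧ G.SplitState s t E') := by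
    rw [Finset.disjoint_left]
    intro a h1 h2
    have c1 := (Finset.mem_filter.mp h1).2.1
    have c2 := (Finset.mem_filter.mp h2).2.1
    omega
  rw [hsplitset, Finset.sum_union hdisj]
  have e1 : ∀ E' ∈ (Finset.univ.filter fun E' : Finset G.E =>
      E'.card = n - 2 ∧ G.SplitState s t E'),
      p ^ E'.card * (1 - p) ^ (n - E'.card) = p ^ (n - 2) * (1 - p) ^ 2 := by
    intro E' hE'
    have hc := (Finset.mem_filter.mp hE').2.1
    have h2 : n - (n - 2) = 2 := by omega
    rw [hc, h2]
  have e2 : ∀ E' ∈ (Finset.univ.filter fun E' : Finset G.E =>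
      E'.card = n - 1 ∧ G.SplitState s t E'),
      p ^ E'.card * (1 - p) ^ (n - E'.card) = p ^ (n - 1) * (1 - p) ^ 1 := by
    intro E' hE'
    have hc := (Finset.mem_filter.mp hE').2.1
    have h2 : n - (n - 1) = 1 := by omega
    rw [hc, h2]
  rw [Finset.sum_congr rfl e1, Finset.sum_congr rfl e2, Finset.sum_const, Finset.sum_const,
    nsmul_eq_mul, nsmul_eq_mul]

lemma pair_not_split (hG : G.Connected) {s t : G.V} {e f : G.E} (hef : e ≠ f)
    (he : G.SplitState s t ({e} : Finset G.E)ᶜ)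
    (hf : G.SplitState s t ({f} : Finset G.E)ᶜ) :
    ¬ G.SplitState s t ({e, f} : Finset G.E)ᶜ := by
  intro hA
  obtain ⟨x, y, hxy⟩ : ∃ x y, G.ends f = s(x, y) := by
    obtain ⟨⟨x, y⟩, h⟩ := (G.ends f).exists_rep
    exact ⟨x, y, h.symm⟩
  have hAf : ({e, f} : Finset G.E)ᶜ ⊆ ({f} : Finset G.E)ᶜ := by
    intro a ha
    simp only [Finset.mem_compl, Finset.mem_insert, Finset.mem_singleton, not_or] at ha ⊢
    exact ha.2
  have hAe : ({e, f} : Finset G.E)ᶜ ⊆ ({e} : Finset G.E)ᶜ := by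
    intro a ha
    simp only [Finset.mem_compl, Finset.mem_insert, Finset.mem_singleton, not_or] at ha ⊢
    exact ha.1
  have main : ∀ x y : G.V, G.ends f = s(x, y) →
      (G.subgraph ({f} : Finset G.E)ᶜ).Reachable s x →
      (G.subgraph ({f} : Finset G.E)ᶜ).Reachable t y → False := by
    intro x y hxy hsx hty
    have hxs : (G.subgraph ({e, f} : Finset G.E)ᶜ).Reachable x s := by
      rcases hA.2 x with h | h
      · exact h
      · exact absurd (hsx.trans ((h.mono (subgraph_mono hAf)))) hf.1
    have hyt : (G.subgraph ({e, f} : Finset G.E)ᶜ).Reachable y t := by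
      rcases hA.2 y with h | h
      · exact absurd ((h.mono (subgraph_mono hAf)).symm.trans hty.symm) hf.1
      · exact h
    have hadj : (G.subgraph ({e} : Finset G.E)ᶜ).Adj x y :=
      ⟨ends_ne hxy, f, by simp [Ne.symm hef], hxy⟩
    exact he.1 (((hxs.symm.mono (subgraph_mono hAe)).trans hadj.reachable).trans
      (hyt.mono (subgraph_mono hAe)))
  have hcompl : Finset.univ.erase f = ({f} : Finset G.E)ᶜ := by
    ext a; simp [Finset.mem_erase, eq_comm]
  have hst' := hG.preconnected s t
  rcases reach_decomp (E' := Finset.univ) hxy hst' with hd | ⟨hs, ht⟩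
  · rw [hcompl] at hd
    exact hf.1 hd
  · rw [hcompl] at hs ht
    rcases hs with hs | hs <;> rcases ht with ht | ht
    · exact hf.1 (hs.trans ht.symm)
    · exact main x y hxy hs ht
    · exact main y x (hxy.trans Sym2.eq_swap) hs ht
    · exact hf.1 (hs.trans ht.symm)

open scoped Classical in
lemma caseB {n : ℕ} (hn : 5 ≤ n) (hG : G.Connected)
    (hV : Fintype.card G.V = n) (hE : Fintype.card G.E = n) {s t : G.V}
    (hB : n - 2 ≤ G.Nst s t (n - 1)) : G.Nst s t (n - 2) ≤ 2 * n - 3 := by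
  classical
  set B : Finset G.E := Finset.univ.filter
    (fun e => G.SplitState s t (({e} : Finset G.E)ᶜ)) with hBdef
  have hcompl_card : ∀ E' : Finset G.E, E'ᶜ.card = n - E'.card := by
    intro E'
    rw [Finset.card_compl, hE]
  have step1 : G.Nst s t (n - 1) ≤ B.card := by
    unfold Nst
    refine Finset.card_le_card_of_surjOn (fun e => ({e} : Finset G.E)ᶜ) ?_
    intro E' hE'
    simp only [Finset.coe_filter, Set.mem_setOf_eq, Finset.mem_univ, true_and] at hE'
    obtain ⟨hcard, hsp⟩ := hE'
    have h1 : E'ᶜ.card = 1 := by rw [hcompl_card, hcard]; omega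
    obtain ⟨e, hee⟩ := Finset.card_eq_one.mp h1
    have hE'eq : E' = ({e} : Finset G.E)ᶜ := by rw [← hee, compl_compl]
    refine ⟨e, ?_, hE'eq.symm⟩
    simp only [hBdef, Finset.coe_filter, Set.mem_setOf_eq, Finset.mem_univ, true_and]
    rwa [← hE'eq]
  have hBn : B.card ≤ n := hE ▸ Finset.card_le_univ B
  have step2 : G.Nst s t (n - 2) ≤ n.choose 2 - (B.card).choose 2 := by
    unfold Nst
    have hle : G.Nst s t (n-2) ≤ ((Finset.univ.powersetCard 2) \ (B.powersetCard 2)).card := by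
      unfold Nst
      refine Finset.card_le_card_of_injOn (fun E' => E'ᶜ) ?_ ?_
      · intro E' hE'
        simp only [Finset.mem_coe, Finset.mem_filter, Finset.mem_univ, true_and] at hE'
        obtain ⟨hcard, hsp⟩ := hE'
        have h2 : E'ᶜ.card = 2 := by rw [hcompl_card, hcard]; omega
        rw [Finset.mem_coe, Finset.mem_sdiff]
        constructor
        · rw [Finset.mem_powersetCard]
          exact ⟨Finset.subset_univ _, h2⟩
        · intro hmem
          rw [Finset.mem_powersetCard] at hmem
          obtain ⟨hsub, _⟩ := hmem
          obtain ⟨a, b, hab, habe⟩ := Finset.card_eq_two.mp h2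
          have haB : a ∈ B := hsub (show a ∈ E'ᶜ by rw [habe]; simp)
          have hbB : b ∈ B := hsub (show b ∈ E'ᶜ by rw [habe]; simp)
          simp only [hBdef, Finset.mem_filter, Finset.mem_univ, true_and] at haB hbB
          have hE'eq : E' = ({a, b} : Finset G.E)ᶜ := by rw [← habe, compl_compl]
          exact pair_not_split hG hab haB hbB (hE'eq ▸ hsp)
      · intro a _ b _ hab
        simpa using congrArg (fun x => xᶜ) hab
    refine le_trans hle ?_
    rw [Finset.card_sdiff_of_subset (Finset.powersetCard_mono (Finset.subset_univ B)),
      Finset.card_powersetCard, Finset.card_powersetCard, Finset.card_univ, hE]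
  have hB2 : n - 2 ≤ B.card := le_trans hB step1
  have hmono : (n - 2).choose 2 ≤ (B.card).choose 2 := Nat.choose_le_choose 2 hB2
  obtain ⟨m, rfl⟩ : ∃ m, n = m + 2 := ⟨n - 2, by omega⟩
  have hch : (m + 2).choose 2 = 2 * m + 1 + m.choose 2 := by
    have h1 : (m + 2).choose 2 = (m + 1).choose 1 + (m + 1).choose 2 :=
      Nat.choose_succ_succ (m + 1) 1
    have h2 : (m + 1).choose 2 = m.choose 1 + m.choose 2 := Nat.choose_succ_succ m 1
    rw [Nat.choose_one_right] at h1 h2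
    omega
  have hms : m + 2 - 2 = m := by omega
  rw [hms] at hmono hB2 step2 ⊢
  have hchb : (B.card).choose 2 ≤ (m+2).choose 2 := Nat.choose_le_choose 2 hBn
  omega

section H1
variable {n : ℕ}

lemma gnm_ends_lt (hn : 5 ≤ n) (e : Fin n) (hlt : e.val < n - 1) :
    (Gnm n n 0 (by omega)).ends e
      = s((⟨e.val, by omega⟩ : Fin n), (⟨e.val + 1, by omega⟩ : Fin n)) := by
  simp only [Gnm, dif_pos hlt]

lemma gnm_ends_ge (hn : 5 ≤ n) (e : Fin n) (hlt : ¬ e.val < n - 1) :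
    (Gnm n n 0 (by omega)).ends e
      = s((⟨0, by omega⟩ : Fin n), (⟨1, by omega⟩ : Fin n)) := by
  simp only [Gnm, dif_neg hlt]

lemma gnm_adj (hn : 5 ≤ n) (E' : Finset (Fin n)) (k : ℕ) (hk : k < n - 1)
    (hmem : (⟨k, by omega⟩ : Fin n) ∈ E') :
    (((Gnm n n 0 (by omega)).subgraph E')).Adj ⟨k, by omega⟩ ⟨k + 1, by omega⟩ := by
  refine ⟨by intro h; erw [Fin.ext_iff] at h; simp only [Fin.val_mk] at h; omega,
    ⟨k, by omega⟩, hmem, ?_⟩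
  exact gnm_ends_lt hn _ hk

lemma gnm_chain (hn : 5 ≤ n) (E' : Finset (Fin n)) (i j : ℕ) (hij : i ≤ j) :
    ∀ (hj : j < n), (∀ e : Fin n, i ≤ e.val → e.val < j → e ∈ E') →
    (((Gnm n n 0 (by omega)).subgraph E')).Reachable ⟨i, by omega⟩ ⟨j, hj⟩ := by
  induction j, hij using Nat.le_induction with
  | base => intro hj hp; exact SimpleGraph.Reachable.refl _
  | succ j hij ih =>
    intro hj hp
    have hstep := gnm_adj hn E' j (by omega) (hp ⟨j, by omega⟩ (by simp only [Fin.val_mk]; exact hij) (by simp only [Fin.val_mk]; omega))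
    exact (ih (by omega) (fun e he1 he2 => hp e he1 (by omega))).trans hstep.reachable

lemma gnm_connected (hn : 5 ≤ n) : (Gnm n n 0 (by omega)).Connected := by
  rw [Multigraph.Connected, SimpleGraph.connected_iff]
  refine ⟨fun u v => ?_, ⟨⟨0, by omega⟩⟩⟩
  have h1 : ∀ w : Fin n,
      (((Gnm n n 0 (by omega)).subgraph Finset.univ)).Reachable ⟨0, by omega⟩ ⟨w.val, w.isLt⟩ :=
    fun w => gnm_chain hn Finset.univ 0 w.val (by omega) w.isLt
      (fun e _ _ => Finset.mem_univ _)
  have hu := h1 u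
  have hv := h1 v
  erw [Fin.eta] at hu hv
  exact hu.symm.trans hv

lemma gnm_split (hn : 5 ≤ n) (j : ℕ) (hj1 : 1 ≤ j) (hj2 : j ≤ n - 2) :
    (Gnm n n 0 (by omega)).SplitState ⟨0, by omega⟩ ⟨n - 1, by omega⟩
      (Finset.univ.erase (⟨j, by omega⟩ : Fin n)) := by
  constructor
  · intro hreach
    have hinv := reach_invar (P := fun v : Fin n => v.val ≤ j) ?_ hreach
    · simp only at hinv
      have := hinv.mp (by omega)
      omega
    · rintro u v ⟨hne, e, he, hends⟩
      have hej : (e : Fin n) ≠ ⟨j, by omega⟩ := (Finset.mem_erase.mp he).1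
      have hej' : e.val ≠ j := by
        intro h; exact hej (Fin.ext h)
      by_cases hlt : e.val < n - 1
      · rw [gnm_ends_lt hn e hlt] at hends
        erw [Sym2.eq_iff] at hends
        rcases hends with ⟨h1, h2⟩ | ⟨h1, h2⟩ <;>
          · erw [Fin.ext_iff] at h1 h2
            simp only [Fin.val_mk] at h1 h2
            constructor <;> intro <;> omega
      · rw [gnm_ends_ge hn e hlt] at hends
        erw [Sym2.eq_iff] at hends
        rcases hends with ⟨h1, h2⟩ | ⟨h1, h2⟩ <;>
          · erw [Fin.ext_iff] at h1 h2
            simp only [Fin.val_mk] at h1 h2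
            constructor <;> intro <;> omega
  · intro v
    by_cases hv : v.val ≤ j
    · left
      have := gnm_chain hn (Finset.univ.erase (⟨j, by omega⟩ : Fin n)) 0 v.val (by omega)
        v.isLt (fun e he1 he2 => Finset.mem_erase.mpr
          ⟨by intro h; erw [Fin.ext_iff] at h; simp only [Fin.val_mk] at h; omega,
            Finset.mem_univ _⟩)
      erw [Fin.eta] at this
      exact this.symm
    · right
      have := gnm_chain hn (Finset.univ.erase (⟨j, by omega⟩ : Fin n)) v.val (n-1) (by omega)
        (by omega) (fun e he1 he2 => Finset.mem_erase.mpr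
          ⟨by intro h; erw [Fin.ext_iff] at h; simp only [Fin.val_mk] at h; omega,
            Finset.mem_univ _⟩)
      erw [Fin.eta] at this
      exact this

open scoped Classical in
lemma gnm_Nst (hn : 5 ≤ n) :
    n - 2 ≤ (Gnm n n 0 (by omega)).Nst ⟨0, by omega⟩ ⟨n - 1, by omega⟩ (n - 1) := by
  classical
  unfold Nst
  have hcard : (Finset.Ico 1 (n-1)).card = n - 2 := by
    rw [Nat.card_Ico]
    omega
  rw [← hcard]
  refine Finset.card_le_card_of_injOn
    (fun j => Finset.univ.erase (⟨j % n, Nat.mod_lt _ (by omega)⟩ : Fin n)) ?_ ?_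
  · intro j hj
    rw [Finset.mem_coe, Finset.mem_Ico] at hj
    have hmod : j % n = j := Nat.mod_eq_of_lt (by omega)
    simp only [Finset.mem_coe, Finset.mem_filter, Finset.mem_univ, true_and]
    constructor
    · erw [Finset.card_erase_of_mem (Finset.mem_univ _), Finset.card_univ]
      have hcardE : Fintype.card (Gnm n n 0 (by omega : (0:ℕ) < n - 1)).E = n :=
        Fintype.card_fin n
      omega
    · have := gnm_split hn j hj.1 (by omega)
      convert this using 2 <;> simp [Fin.ext_iff, hmod]
  · intro a ha b hb hab
    simp only at hab
    rw [Finset.mem_coe, Finset.mem_Ico] at ha hb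
    have : (⟨a % n, Nat.mod_lt _ (by omega)⟩ : Fin n) = ⟨b % n, Nat.mod_lt _ (by omega)⟩ := by
      by_contra hne
      have hmem : (⟨a % n, Nat.mod_lt _ (by omega)⟩ : Fin n)
          ∈ Finset.univ.erase (⟨b % n, Nat.mod_lt _ (by omega)⟩ : Fin n) :=
        Finset.mem_erase.mpr ⟨hne, Finset.mem_univ _⟩
      erw [← hab] at hmem
      exact (Finset.mem_erase.mp hmem).1 rfl
    rw [Fin.ext_iff] at this
    simp only [Fin.val_mk] at this
    rw [Nat.mod_eq_of_lt (by omega : a < n), Nat.mod_eq_of_lt (by omega : b < n)] at this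
    exact this

end H1

section H2
variable {n : ℕ}

lemma tri_ends_lt (hn : 5 ≤ n) (e : Fin n) (hlt : e.val < n - 3) :
    (triGraph n (by omega)).ends e
      = s((⟨e.val, by omega⟩ : Fin n), (⟨e.val + 1, by omega⟩ : Fin n)) := by
  simp only [triGraph, dif_pos hlt]

lemma tri_ends_a (hn : 5 ≤ n) (e : Fin n) (h : e.val = n - 3) :
    (triGraph n (by omega)).ends e
      = s((⟨n - 3, by omega⟩ : Fin n), (⟨n - 2, by omega⟩ : Fin n)) := by
  simp only [triGraph, dif_neg (by omega : ¬ e.val < n - 3), if_pos h]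

lemma tri_ends_b (hn : 5 ≤ n) (e : Fin n) (h : e.val = n - 2) :
    (triGraph n (by omega)).ends e
      = s((⟨n - 2, by omega⟩ : Fin n), (⟨n - 1, by omega⟩ : Fin n)) := by
  simp only [triGraph, dif_neg (by omega : ¬ e.val < n - 3),
    if_neg (by omega : ¬ e.val = n - 3), if_pos h]

lemma tri_ends_c (hn : 5 ≤ n) (e : Fin n) (h : e.val = n - 1) :
    (triGraph n (by omega)).ends e
      = s((⟨n - 1, by omega⟩ : Fin n), (⟨n - 3, by omega⟩ : Fin n)) := by
  simp only [triGraph, dif_neg (by omega : ¬ e.val < n - 3),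
    if_neg (by omega : ¬ e.val = n - 3), if_neg (by omega : ¬ e.val = n - 2)]

lemma tri_adj_path (hn : 5 ≤ n) (E' : Finset (Fin n)) (k : ℕ) (hk : k < n - 3)
    (hmem : (⟨k, by omega⟩ : Fin n) ∈ E') :
    (((triGraph n (by omega)).subgraph E')).Adj ⟨k, by omega⟩ ⟨k + 1, by omega⟩ := by
  refine ⟨by intro h; erw [Fin.ext_iff] at h; simp only [Fin.val_mk] at h; omega,
    ⟨k, by omega⟩, hmem, ?_⟩
  exact tri_ends_lt hn _ hk

lemma tri_adj_a (hn : 5 ≤ n) (E' : Finset (Fin n))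
    (hmem : (⟨n - 3, by omega⟩ : Fin n) ∈ E') :
    (((triGraph n (by omega)).subgraph E')).Adj ⟨n - 3, by omega⟩ ⟨n - 2, by omega⟩ := by
  refine ⟨by intro h; erw [Fin.ext_iff] at h; simp only [Fin.val_mk] at h; omega,
    ⟨n - 3, by omega⟩, hmem, ?_⟩
  exact tri_ends_a hn _ rfl

lemma tri_adj_b (hn : 5 ≤ n) (E' : Finset (Fin n))
    (hmem : (⟨n - 2, by omega⟩ : Fin n) ∈ E') :
    (((triGraph n (by omega)).subgraph E')).Adj ⟨n - 2, by omega⟩ ⟨n - 1, by omega⟩ := by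
  refine ⟨by intro h; erw [Fin.ext_iff] at h; simp only [Fin.val_mk] at h; omega,
    ⟨n - 2, by omega⟩, hmem, ?_⟩
  exact tri_ends_b hn _ rfl

lemma tri_adj_c (hn : 5 ≤ n) (E' : Finset (Fin n))
    (hmem : (⟨n - 1, by omega⟩ : Fin n) ∈ E') :
    (((triGraph n (by omega)).subgraph E')).Adj ⟨n - 1, by omega⟩ ⟨n - 3, by omega⟩ := by
  refine ⟨by intro h; erw [Fin.ext_iff] at h; simp only [Fin.val_mk] at h; omega,
    ⟨n - 1, by omega⟩, hmem, ?_⟩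
  exact tri_ends_c hn _ rfl

lemma tri_chain (hn : 5 ≤ n) (E' : Finset (Fin n)) (i j : ℕ) (hij : i ≤ j) :
    ∀ (hj : j ≤ n - 3), (∀ e : Fin n, i ≤ e.val → e.val < j → e ∈ E') →
    (((triGraph n (by omega)).subgraph E')).Reachable ⟨i, by omega⟩ ⟨j, by omega⟩ := by
  induction j, hij using Nat.le_induction with
  | base => intro hj hp; exact SimpleGraph.Reachable.refl _
  | succ j hij ih =>
    intro hj hp
    have hstep := tri_adj_path hn E' j (by omega)
      (hp ⟨j, by omega⟩ (by simp only [Fin.val_mk]; exact hij)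
        (by simp only [Fin.val_mk]; omega))
    exact (ih (by omega) (fun e he1 he2 => hp e he1 (by omega))).trans hstep.reachable

lemma tri_reach_zero (hn : 5 ≤ n) (E' : Finset (Fin n))
    (hpath : ∀ e : Fin n, e.val < n - 3 → e ∈ E') (v : Fin n) (hv : v.val ≤ n - 3) :
    (((triGraph n (by omega)).subgraph E')).Reachable v ⟨0, by omega⟩ := by
  have := tri_chain hn E' 0 v.val (by omega) (by omega) (fun e he1 he2 => hpath e (by omega))
  erw [Fin.eta] at this
  exact this.symm

lemma tri_connected (hn : 5 ≤ n) : (triGraph n (by omega)).Connected := by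
  rw [Multigraph.Connected, SimpleGraph.connected_iff]
  refine ⟨fun u v => ?_, ⟨⟨0, by omega⟩⟩⟩
  have h1 : ∀ w : Fin n,
      (((triGraph n (by omega)).subgraph Finset.univ)).Reachable w ⟨0, by omega⟩ := by
    intro w
    by_cases hw : w.val ≤ n - 3
    · exact tri_reach_zero hn Finset.univ (fun e _ => Finset.mem_univ _) w hw
    · have hz := tri_reach_zero hn Finset.univ (fun e _ => Finset.mem_univ _)
        ⟨n - 3, by omega⟩ (by simp)
      by_cases hw2 : w.val = n - 2
      · have hadj := tri_adj_a hn Finset.univ (Finset.mem_univ _)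
        have : w = ⟨n - 2, by omega⟩ := Fin.ext (by simp [hw2])
        rw [this]
        exact hadj.reachable.symm.trans hz
      · have hwv : w = ⟨n - 1, by omega⟩ := Fin.ext (by simp; omega)
        have hadj := tri_adj_c hn Finset.univ (Finset.mem_univ _)
        rw [hwv]
        exact hadj.reachable.trans hz
  exact (h1 u).trans (h1 v).symm

end H2

section H2b
variable {n : ℕ}

lemma tri_mem_sdiff (hn : 5 ≤ n) (j τ : ℕ) (hj : j < n) (hτ : τ < n) (e : Fin n)
    (h1 : e.val ≠ j) (h2 : e.val ≠ τ) :
    e ∈ Finset.univ \ ({⟨j, hj⟩, ⟨τ, hτ⟩} : Finset (Fin n)) := by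
  rw [Finset.mem_sdiff]
  refine ⟨Finset.mem_univ _, ?_⟩
  simp only [Finset.mem_insert, Finset.mem_singleton, Fin.ext_iff, Fin.val_mk]
  omega

lemma tri_split_path (hn : 5 ≤ n) (j τ : ℕ) (hj : j < n - 3)
    (hτ : τ = n - 3 ∨ τ = n - 2 ∨ τ = n - 1) :
    (triGraph n (by omega)).SplitState ⟨0, by omega⟩ ⟨n - 2, by omega⟩
      (Finset.univ \ ({⟨j, by omega⟩, ⟨τ, by omega⟩} : Finset (Fin n))) := by
  set S := Finset.univ \ ({⟨j, by omega⟩, ⟨τ, by omega⟩} : Finset (Fin n)) with hS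
  have hmem : ∀ e : Fin n, e ∈ S → e.val ≠ j ∧ e.val ≠ τ := by
    intro e he
    rw [hS, Finset.mem_sdiff] at he
    simp only [Finset.mem_insert, Finset.mem_singleton, Fin.ext_iff, Fin.val_mk] at he
    push_neg at he
    exact he.2
  constructor
  · intro hreach
    have hinv := reach_invar (P := fun v : Fin n => v.val ≤ j) ?_ hreach
    · simp only [Fin.val_mk] at hinv
      have := hinv.mp (by omega)
      omega
    · rintro u v ⟨hne, e, he, hends⟩
      obtain ⟨hej, heτ⟩ := hmem e he
      by_cases h1 : e.val < n - 3
      · erw [tri_ends_lt hn e h1, Sym2.eq_iff] at hends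
        rcases hends with ⟨ha, hb⟩ | ⟨ha, hb⟩ <;>
          · erw [Fin.ext_iff] at ha hb
            simp only [Fin.val_mk] at ha hb
            constructor <;> intro <;> omega
      · by_cases h2 : e.val = n - 3
        · erw [tri_ends_a hn e h2, Sym2.eq_iff] at hends
          rcases hends with ⟨ha, hb⟩ | ⟨ha, hb⟩ <;>
            · erw [Fin.ext_iff] at ha hb
              simp only [Fin.val_mk] at ha hb
              constructor <;> intro <;> omega
        · by_cases h3 : e.val = n - 2
          · erw [tri_ends_b hn e h3, Sym2.eq_iff] at hends
            rcases hends with ⟨ha, hb⟩ | ⟨ha, hb⟩ <;>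
              · erw [Fin.ext_iff] at ha hb
                simp only [Fin.val_mk] at ha hb
                constructor <;> intro <;> omega
          · have h4 : e.val = n - 1 := by have := e.isLt; omega
            erw [tri_ends_c hn e h4, Sym2.eq_iff] at hends
            rcases hends with ⟨ha, hb⟩ | ⟨ha, hb⟩ <;>
              · erw [Fin.ext_iff] at ha hb
                simp only [Fin.val_mk] at ha hb
                constructor <;> intro <;> omega
  · intro v
    have hpath_lo : ∀ e : Fin n, e.val < j → e ∈ S :=
      fun e he => tri_mem_sdiff hn j τ (by omega) (by omega) e (by omega) (by omega)
    have hpath_hi : ∀ e : Fin n, j < e.val → e.val < n - 3 → e ∈ S :=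
      fun e he1 he2 => tri_mem_sdiff hn j τ (by omega) (by omega) e (by omega) (by omega)
    by_cases hv : v.val ≤ j
    · left
      have := tri_chain hn S 0 v.val (by omega) (by omega)
        (fun e he1 he2 => hpath_lo e (by omega))
      erw [Fin.eta] at this
      exact this.symm
    · right
      -- reach from ⟨n-3⟩ to ⟨n-2⟩ within S
      have hreach_a : (((triGraph n (by omega)).subgraph S)).Reachable
          ⟨n - 3, by omega⟩ ⟨n - 2, by omega⟩ := by
        rcases hτ with rfl | rfl | rfl
        · have hadjc := tri_adj_c hn S
            (tri_mem_sdiff hn j _ (by omega) (by omega) _ (by simp; omega) (by simp; omega))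
          have hadjb := tri_adj_b hn S
            (tri_mem_sdiff hn j _ (by omega) (by omega) _ (by simp; omega) (by simp; omega))
          exact hadjc.reachable.symm.trans hadjb.reachable.symm
        · exact (tri_adj_a hn S
            (tri_mem_sdiff hn j _ (by omega) (by omega) _ (by simp; omega)
              (by simp; omega))).reachable
        · exact (tri_adj_a hn S
            (tri_mem_sdiff hn j _ (by omega) (by omega) _ (by simp; omega)
              (by simp; omega))).reachable
      by_cases hv2 : v.val ≤ n - 3
      · have hchain := tri_chain hn S v.val (n - 3) (by omega) (by omega)
          (fun e he1 he2 => hpath_hi e (by omega) (by omega))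
        erw [Fin.eta] at hchain
        exact hchain.trans hreach_a
      · by_cases hv3 : v.val = n - 2
        · have : v = ⟨n - 2, by omega⟩ := Fin.ext (by simp [hv3])
          rw [this]
          exact SimpleGraph.Reachable.refl _
        · have hv4 : v = ⟨n - 1, by omega⟩ := Fin.ext (by simp; omega)
          rw [hv4]
          rcases hτ with rfl | rfl | rfl
          · exact (tri_adj_b hn S
              (tri_mem_sdiff hn j _ (by omega) (by omega) _ (by simp; omega)
                (by simp; omega))).reachable.symm
          · have hadjc := tri_adj_c hn S
              (tri_mem_sdiff hn j _ (by omega) (by omega) _ (by simp; omega) (by simp; omega))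
            exact hadjc.reachable.trans hreach_a
          · exact (tri_adj_b hn S
              (tri_mem_sdiff hn j _ (by omega) (by omega) _ (by simp; omega)
                (by simp; omega))).reachable.symm

end H2b

section H2c
variable {n : ℕ}

lemma tri_split_x1 (hn : 5 ≤ n) :
    (triGraph n (by omega)).SplitState ⟨0, by omega⟩ ⟨n - 2, by omega⟩
      (Finset.univ \ ({⟨n - 3, by omega⟩, ⟨n - 2, by omega⟩} : Finset (Fin n))) := by
  set S := Finset.univ \ ({⟨n - 3, by omega⟩, ⟨n - 2, by omega⟩} : Finset (Fin n)) with hS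
  have hmem : ∀ e : Fin n, e ∈ S → e.val ≠ n - 3 ∧ e.val ≠ n - 2 := by
    intro e he
    rw [hS, Finset.mem_sdiff] at he
    simp only [Finset.mem_insert, Finset.mem_singleton, Fin.ext_iff, Fin.val_mk] at he
    push_neg at he
    exact he.2
  constructor
  · intro hreach
    have hinv := reach_invar (P := fun v : Fin n => v.val ≠ n - 2) ?_ hreach
    · simp only [Fin.val_mk] at hinv
      have := hinv.mp (by omega)
      omega
    · rintro u v ⟨hne, e, he, hends⟩
      obtain ⟨he1, he2⟩ := hmem e he
      by_cases h1 : e.val < n - 3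
      · erw [tri_ends_lt hn e h1, Sym2.eq_iff] at hends
        rcases hends with ⟨ha, hb⟩ | ⟨ha, hb⟩ <;>
          · erw [Fin.ext_iff] at ha hb
            simp only [Fin.val_mk] at ha hb
            constructor <;> intro <;> omega
      · have h4 : e.val = n - 1 := by have := e.isLt; omega
        erw [tri_ends_c hn e h4, Sym2.eq_iff] at hends
        rcases hends with ⟨ha, hb⟩ | ⟨ha, hb⟩ <;>
          · erw [Fin.ext_iff] at ha hb
            simp only [Fin.val_mk] at ha hb
            constructor <;> intro <;> omega
  · intro v
    have hpath : ∀ e : Fin n, e.val < n - 3 → e ∈ S := by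
      intro e he
      rw [hS]
      exact tri_mem_sdiff hn (n - 3) (n - 2) (by omega) (by omega) e (by omega) (by omega)
    by_cases hv : v.val ≤ n - 3
    · exact Or.inl (tri_reach_zero hn S hpath v hv)
    · by_cases hv2 : v.val = n - 2
      · right
        have : v = ⟨n - 2, by omega⟩ := Fin.ext (by simp [hv2])
        rw [this]
        exact SimpleGraph.Reachable.refl _
      · left
        have hv4 : v = ⟨n - 1, by omega⟩ := Fin.ext (by simp; omega)
        have hadjc := tri_adj_c hn S (by
          rw [hS]
          exact tri_mem_sdiff hn (n - 3) (n - 2) (by omega) (by omega) _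
            (by simp; omega) (by simp; omega))
        have hz := tri_reach_zero hn S hpath ⟨n - 3, by omega⟩ (by simp)
        rw [hv4]
        exact hadjc.reachable.trans hz

lemma tri_split_x2 (hn : 5 ≤ n) :
    (triGraph n (by omega)).SplitState ⟨0, by omega⟩ ⟨n - 2, by omega⟩
      (Finset.univ \ ({⟨n - 3, by omega⟩, ⟨n - 1, by omega⟩} : Finset (Fin n))) := by
  set S := Finset.univ \ ({⟨n - 3, by omega⟩, ⟨n - 1, by omega⟩} : Finset (Fin n)) with hS
  have hmem : ∀ e : Fin n, e ∈ S → e.val ≠ n - 3 ∧ e.val ≠ n - 1 := by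
    intro e he
    rw [hS, Finset.mem_sdiff] at he
    simp only [Finset.mem_insert, Finset.mem_singleton, Fin.ext_iff, Fin.val_mk] at he
    push_neg at he
    exact he.2
  constructor
  · intro hreach
    have hinv := reach_invar (P := fun v : Fin n => v.val ≤ n - 3) ?_ hreach
    · simp only [Fin.val_mk] at hinv
      have := hinv.mp (by omega)
      omega
    · rintro u v ⟨hne, e, he, hends⟩
      obtain ⟨he1, he2⟩ := hmem e he
      by_cases h1 : e.val < n - 3
      · erw [tri_ends_lt hn e h1, Sym2.eq_iff] at hends
        rcases hends with ⟨ha, hb⟩ | ⟨ha, hb⟩ <;>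
          · erw [Fin.ext_iff] at ha hb
            simp only [Fin.val_mk] at ha hb
            constructor <;> intro <;> omega
      · have h4 : e.val = n - 2 := by have := e.isLt; omega
        erw [tri_ends_b hn e h4, Sym2.eq_iff] at hends
        rcases hends with ⟨ha, hb⟩ | ⟨ha, hb⟩ <;>
          · erw [Fin.ext_iff] at ha hb
            simp only [Fin.val_mk] at ha hb
            constructor <;> intro <;> omega
  · intro v
    have hpath : ∀ e : Fin n, e.val < n - 3 → e ∈ S := by
      intro e he
      rw [hS]
      exact tri_mem_sdiff hn (n - 3) (n - 1) (by omega) (by omega) e (by omega) (by omega)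
    by_cases hv : v.val ≤ n - 3
    · exact Or.inl (tri_reach_zero hn S hpath v hv)
    · right
      by_cases hv2 : v.val = n - 2
      · have : v = ⟨n - 2, by omega⟩ := Fin.ext (by simp [hv2])
        rw [this]
        exact SimpleGraph.Reachable.refl _
      · have hv4 : v = ⟨n - 1, by omega⟩ := Fin.ext (by simp; omega)
        have hadjb := tri_adj_b hn S (by
          rw [hS]
          exact tri_mem_sdiff hn (n - 3) (n - 1) (by omega) (by omega) _
            (by simp; omega) (by simp; omega))
        rw [hv4]
        exact hadjb.reachable.symm

end H2c

section H2d
variable {n : ℕ}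

open scoped Classical in
lemma tri_Nst (hn : 5 ≤ n) :
    2 * n - 2 ≤ (triGraph n (by omega)).Nst ⟨0, by omega⟩ ⟨n - 2, by omega⟩ (n - 2) := by
  classical
  unfold Nst
  have hn0 : 0 < n := by omega
  set I : Finset (ℕ × ℕ) := ((Finset.range (n - 3)) ×ˢ ({n - 3, n - 2, n - 1} : Finset ℕ))
      ∪ {(n - 3, n - 2), (n - 3, n - 1)} with hI
  have hIchar : ∀ q : ℕ × ℕ, q ∈ I →
      (q.1 < n - 3 ∧ (q.2 = n - 3 ∨ q.2 = n - 2 ∨ q.2 = n - 1)) ∨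
      (q.1 = n - 3 ∧ (q.2 = n - 2 ∨ q.2 = n - 1)) := by
    intro q hq
    rw [hI, Finset.mem_union] at hq
    rcases hq with hq | hq
    · rw [Finset.mem_product, Finset.mem_range] at hq
      simp only [Finset.mem_insert, Finset.mem_singleton] at hq
      exact Or.inl hq
    · simp only [Finset.mem_insert, Finset.mem_singleton, Prod.ext_iff] at hq
      rcases hq with ⟨h1, h2⟩ | ⟨h1, h2⟩
      · exact Or.inr ⟨h1, Or.inl h2⟩
      · exact Or.inr ⟨h1, Or.inr h2⟩
  have hIcard : I.card = 3 * (n - 3) + 2 := by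
    rw [hI, Finset.card_union_of_disjoint, Finset.card_product, Finset.card_range]
    · have h3 : ({n - 3, n - 2, n - 1} : Finset ℕ).card = 3 := by
        rw [Finset.card_insert_of_notMem (by simp; omega),
          Finset.card_insert_of_notMem (by simp; omega), Finset.card_singleton]
      have h2 : ({(n - 3, n - 2), (n - 3, n - 1)} : Finset (ℕ × ℕ)).card = 2 := by
        rw [Finset.card_insert_of_notMem (by simp [Prod.ext_iff]; omega),
          Finset.card_singleton]
      rw [h3, h2]
      omega
    · rw [Finset.disjoint_left]
      intro q hq1 hq2
      rw [Finset.mem_product, Finset.mem_range] at hq1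
      simp only [Finset.mem_insert, Finset.mem_singleton, Prod.ext_iff] at hq2
      omega
  have hfmk : ∀ (a : ℕ) (ha : a < n), (⟨a % n, Nat.mod_lt _ hn0⟩ : Fin n) = ⟨a, ha⟩ :=
    fun a ha => Fin.ext (by simp [Nat.mod_eq_of_lt ha])
  have hle : 2 * n - 2 ≤ I.card := by omega
  refine le_trans hle (Finset.card_le_card_of_injOn
    (fun q => Finset.univ \
      ({⟨q.1 % n, Nat.mod_lt _ hn0⟩, ⟨q.2 % n, Nat.mod_lt _ hn0⟩} : Finset (Fin n))) ?_ ?_)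
  · rintro ⟨q1, q2⟩ hq
    have hrange : q1 ≤ n - 3 ∧ (q2 = n - 3 ∨ q2 = n - 2 ∨ q2 = n - 1) := by
      rcases hIchar _ hq with ⟨h1, h2⟩ | ⟨h1, h2⟩
      · exact ⟨by omega, h2⟩
      · exact ⟨by omega, by omega⟩
    have hq1n : q1 < n := by omega
    have hq2n : q2 < n := by omega
    simp only [Finset.mem_coe, Finset.mem_filter, Finset.mem_univ, true_and]
    rw [hfmk q1 hq1n, hfmk q2 hq2n]
    have hne12 : (⟨q1, hq1n⟩ : Fin n) ≠ ⟨q2, hq2n⟩ := by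
      simp only [ne_eq, Fin.mk.injEq]
      rcases hIchar _ hq with ⟨h1, h2⟩ | ⟨h1, h2⟩ <;> simp only at h1 h2 <;> omega
    constructor
    · erw [Finset.card_sdiff_of_subset (Finset.subset_univ _), Finset.card_univ]
      erw [Finset.card_insert_of_notMem (Finset.notMem_singleton.mpr hne12), Finset.card_singleton]
      have hcardE : Fintype.card (triGraph n (by omega : 4 ≤ n)).E = n := Fintype.card_fin n
      omega
    · rcases hIchar _ hq with ⟨h1, h2⟩ | ⟨h1, h2⟩
      · rcases h2 with rfl | rfl | rfl
        · exact tri_split_path hn q1 (n - 3) h1 (Or.inl rfl)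
        · exact tri_split_path hn q1 (n - 2) h1 (Or.inr (Or.inl rfl))
        · exact tri_split_path hn q1 (n - 1) h1 (Or.inr (Or.inr rfl))
      · rcases h2 with rfl | rfl
        · have hx := tri_split_x1 hn
          have he1 : (⟨q1, hq1n⟩ : Fin n) = ⟨n - 3, by omega⟩ := Fin.ext (by simpa using h1)
          rw [he1]
          exact hx
        · have hx := tri_split_x2 hn
          have he1 : (⟨q1, hq1n⟩ : Fin n) = ⟨n - 3, by omega⟩ := Fin.ext (by simpa using h1)
          rw [he1]
          exact hx
  · rintro ⟨q1, q2⟩ hq ⟨q1', q2'⟩ hq' hfeq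
    rw [Finset.mem_coe] at hq hq'
    have hr : q1 ≤ n - 3 ∧ q2 ≤ n - 1 ∧ q2 ≥ n - 3 := by
      rcases hIchar _ hq with ⟨h1, h2⟩ | ⟨h1, h2⟩ <;> omega
    have hr' : q1' ≤ n - 3 ∧ q2' ≤ n - 1 ∧ q2' ≥ n - 3 := by
      rcases hIchar _ hq' with ⟨h1, h2⟩ | ⟨h1, h2⟩ <;> omega
    simp only at hfeq
    have hXY : ({⟨q1 % n, Nat.mod_lt _ hn0⟩, ⟨q2 % n, Nat.mod_lt _ hn0⟩} : Finset (Fin n))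
        = {⟨q1' % n, Nat.mod_lt _ hn0⟩, ⟨q2' % n, Nat.mod_lt _ hn0⟩} := by
      ext a
      have h := Finset.ext_iff.mp hfeq a
      erw [Finset.mem_sdiff, Finset.mem_sdiff] at h
      replace h := (and_congr_right_iff.mp h) (Finset.mem_univ _)
      exact not_iff_not.mp h
    rw [hfmk q1 (by omega), hfmk q2 (by omega), hfmk q1' (by omega), hfmk q2' (by omega)]
      at hXY
    have hm1 : (⟨q1, by omega⟩ : Fin n) ∈
        ({⟨q1', by omega⟩, ⟨q2', by omega⟩} : Finset (Fin n)) := by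
      rw [← hXY]; simp
    have hm2 : (⟨q2, by omega⟩ : Fin n) ∈
        ({⟨q1', by omega⟩, ⟨q2', by omega⟩} : Finset (Fin n)) := by
      rw [← hXY]; simp
    have hm1' : (⟨q1', by omega⟩ : Fin n) ∈
        ({⟨q1, by omega⟩, ⟨q2, by omega⟩} : Finset (Fin n)) := by
      rw [hXY]; simp
    simp only [Finset.mem_insert, Finset.mem_singleton, Fin.ext_iff, Fin.val_mk]
      at hm1 hm2 hm1'
    have hchar := hIchar _ hq
    have hchar' := hIchar _ hq'
    simp only at hchar hchar'
    have : q1 = q1' ∧ q2 = q2' := by omega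
    exact Prod.ext this.1 this.2
end H2d

open scoped Classical in
lemma Nst_le_pow {G : Multigraph} (s t : G.V) (i : ℕ) :
    G.Nst s t i ≤ 2 ^ (Fintype.card G.E) := by
  classical
  unfold Nst
  calc (Finset.univ.filter fun E' : Finset G.E =>
      E'.card = i ∧ G.SplitState s t E').card
      ≤ (Finset.univ : Finset (Finset G.E)).card := Finset.card_filter_le _ _
    _ = Fintype.card (Finset G.E) := Finset.card_univ
    _ = 2 ^ (Fintype.card G.E) := Fintype.card_finset

end Multigraph

/-- If `n = m ≥ 5`, then there is no optimal `(n,n)`-graph: for every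
connected `(n,n)`-multigraph `G` with distinct terminals `s, t` there is a connected
`(n,n)`-multigraph `H` with distinct terminals `s', t'` and some `p ∈ (0,1)` with
`sRel(H,s',t';p) > sRel(G,s,t;p)`. -/
theorem no_optimal_of_eq_of_five_le (n : ℕ) (hn : 5 ≤ n)
    (G : Multigraph) (s t : G.V) (hG : G.Connected)
    (hV : Fintype.card G.V = n) (hE : Fintype.card G.E = n) (hst : s ≠ t) :
    ∃ (H : Multigraph) (s' t' : H.V), H.Connected ∧ Fintype.card H.V = n ∧
      Fintype.card H.E = n ∧ s' ≠ t' ∧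
      ∃ p : ℝ, 0 < p ∧ p < 1 ∧ G.sRel s t p < H.sRel s' t' p := by
  set M : ℝ := (2 : ℝ) ^ n with hM
  have hM1 : (1 : ℝ) ≤ M := by rw [hM]; exact one_le_pow₀ (by norm_num)
  have hM0 : (0 : ℝ) < M := lt_of_lt_of_le one_pos hM1
  have hAGle : (G.Nst s t (n - 2) : ℝ) ≤ M := by
    have h := Multigraph.Nst_le_pow s t (n - 2)
    rw [hE] at h
    calc (G.Nst s t (n - 2) : ℝ) ≤ ((2 ^ n : ℕ) : ℝ) := by exact_mod_cast h
      _ = M := by push_cast; rfl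
  have hBGle : (G.Nst s t (n - 1) : ℝ) ≤ M := by
    have h := Multigraph.Nst_le_pow s t (n - 1)
    rw [hE] at h
    calc (G.Nst s t (n - 1) : ℝ) ≤ ((2 ^ n : ℕ) : ℝ) := by exact_mod_cast h
      _ = M := by push_cast; rfl
  by_cases hcase : G.Nst s t (n - 1) ≤ n - 3
  · -- G is weak near p = 1 : use Gnm n n 0
    refine ⟨Multigraph.Gnm n n 0 (by omega), ⟨0, by omega⟩, ⟨n - 1, by omega⟩,
      Multigraph.gnm_connected hn, Fintype.card_fin n, Fintype.card_fin n,
      Fin.ne_of_val_ne (show (0:ℕ) ≠ n - 1 by omega), ?_⟩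
    set D : ℝ := 2 * M + 1 with hD
    have hD0 : (0 : ℝ) < D := by positivity
    set p : ℝ := 2 * M / D with hp
    have hp0 : 0 < p := by positivity
    have hp1 : p < 1 := by
      rw [hp, div_lt_one hD0, hD]
      linarith
    have h1p : 1 - p = 1 / D := by
      rw [hp, hD]
      field_simp
      ring
    refine ⟨p, hp0, hp1, ?_⟩
    have hpform : p = 2 * M * (1 - p) := by
      rw [h1p, hp]
      field_simp
    have hGform := Multigraph.sRel_eq hn hG hV hE s t p
    have hHform := Multigraph.sRel_eq (G := Multigraph.Gnm n n 0 (by omega)) hn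
      (Multigraph.gnm_connected hn) (Fintype.card_fin n) (Fintype.card_fin n)
      ⟨0, by omega⟩ ⟨n - 1, by omega⟩ p
    set x : ℝ := p ^ (n - 2) * (1 - p) ^ 2 with hx
    set y : ℝ := p ^ (n - 1) * (1 - p) ^ 1 with hy
    have hx0 : 0 < x := by
      rw [hx]
      have : 0 < 1 - p := by linarith
      positivity
    have hyx : y = 2 * M * x := by
      rw [hx, hy]
      have hn1 : n - 1 = (n - 2) + 1 := by omega
      rw [hn1, pow_succ, pow_one, sq]
      calc p ^ (n-2) * p * (1 - p) = p ^ (n-2) * (2 * M * (1 - p)) * (1-p) := by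
            rw [← hpform]
        _ = 2 * M * (p ^ (n-2) * ((1 - p) * (1-p))) := by ring
    rw [hGform, hHform]
    have hBH : ((n : ℝ) - 2) ≤ ((Multigraph.Gnm n n 0 (by omega)).Nst
        ⟨0, by omega⟩ ⟨n - 1, by omega⟩ (n - 1) : ℝ) := by
      have h := Multigraph.gnm_Nst hn
      calc ((n : ℝ) - 2) = ((n - 2 : ℕ) : ℝ) := by
            rw [Nat.cast_sub (by omega)]; norm_num
        _ ≤ _ := by exact_mod_cast h
    have hBG : (G.Nst s t (n - 1) : ℝ) ≤ (n : ℝ) - 3 := by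
      calc (G.Nst s t (n - 1) : ℝ) ≤ ((n - 3 : ℕ) : ℝ) := by exact_mod_cast hcase
        _ = (n : ℝ) - 3 := by rw [Nat.cast_sub (by omega)]; norm_num
    have hAH : (0 : ℝ) ≤ ((Multigraph.Gnm n n 0 (by omega)).Nst
        ⟨0, by omega⟩ ⟨n - 1, by omega⟩ (n - 2) : ℝ) := Nat.cast_nonneg _
    have h1p0 : 0 < 1 - p := by linarith
    have hy0 : 0 < y := by rw [hy]; positivity
    have f1 := mul_le_mul_of_nonneg_right hAGle hx0.le
    have f2 := mul_le_mul_of_nonneg_right hBG hy0.le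
    have f3 := mul_nonneg hAH hx0.le
    have f4 := mul_le_mul_of_nonneg_right hBH hy0.le
    have f4' : ((n:ℝ) - 2) * y = ((n:ℝ) - 3) * y + y := by ring
    have f5 : y = 2 * (M * x) := by rw [hyx]; ring
    have f6 : 0 < M * x := mul_pos hM0 hx0
    linarith [f1, f2, f3, f4, f4', f5, f6]
  · -- G is weak near p = 0 : use triGraph n
    have hcase2 : n - 2 ≤ G.Nst s t (n - 1) := by omega
    have hAG : G.Nst s t (n - 2) ≤ 2 * n - 3 :=
      Multigraph.caseB hn hG hV hE hcase2
    refine ⟨Multigraph.triGraph n (by omega), ⟨0, by omega⟩, ⟨n - 2, by omega⟩,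
      Multigraph.tri_connected hn, Fintype.card_fin n, Fintype.card_fin n,
      Fin.ne_of_val_ne (show (0:ℕ) ≠ n - 2 by omega), ?_⟩
    set D : ℝ := 2 * M + 1 with hD
    have hD0 : (0 : ℝ) < D := by positivity
    set p : ℝ := 1 / D with hp
    have hp0 : 0 < p := by positivity
    have hp1 : p < 1 := by
      rw [hp, div_lt_one hD0, hD]
      linarith
    have h1p : 1 - p = 2 * M / D := by
      rw [hp, hD]
      field_simp
      ring
    refine ⟨p, hp0, hp1, ?_⟩
    have hpform : 1 - p = 2 * M * p := by
      rw [h1p, hp]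
      ring
    have hGform := Multigraph.sRel_eq hn hG hV hE s t p
    have hHform := Multigraph.sRel_eq (G := Multigraph.triGraph n (by omega)) hn
      (Multigraph.tri_connected hn) (Fintype.card_fin n) (Fintype.card_fin n)
      ⟨0, by omega⟩ ⟨n - 2, by omega⟩ p
    set x : ℝ := p ^ (n - 2) * (1 - p) ^ 2 with hx
    set y : ℝ := p ^ (n - 1) * (1 - p) ^ 1 with hy
    have h1p0 : 0 < 1 - p := by linarith
    have hy0 : 0 < y := by rw [hy]; positivity
    have hxy : x = 2 * M * y := by
      rw [hx, hy]
      have hn1 : n - 1 = (n - 2) + 1 := by omega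
      rw [hn1, pow_succ, pow_one, hpform]
      ring
    rw [hGform, hHform]
    have hAH : ((2 : ℝ) * n - 2) ≤ ((Multigraph.triGraph n (by omega)).Nst
        ⟨0, by omega⟩ ⟨n - 2, by omega⟩ (n - 2) : ℝ) := by
      have h := Multigraph.tri_Nst hn
      calc ((2:ℝ) * n - 2) = ((2 * n - 2 : ℕ) : ℝ) := by
            rw [Nat.cast_sub (by omega)]; push_cast; ring
        _ ≤ _ := by exact_mod_cast h
    have hAGr : (G.Nst s t (n - 2) : ℝ) ≤ 2 * (n : ℝ) - 3 := by
      calc (G.Nst s t (n - 2) : ℝ) ≤ ((2 * n - 3 : ℕ) : ℝ) := by exact_mod_cast hAG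
        _ = 2 * (n : ℝ) - 3 := by rw [Nat.cast_sub (by omega)]; push_cast; ring
    have hBH : (0 : ℝ) ≤ ((Multigraph.triGraph n (by omega)).Nst
        ⟨0, by omega⟩ ⟨n - 2, by omega⟩ (n - 1) : ℝ) := Nat.cast_nonneg _
    have hx0 : 0 < x := by rw [hx]; positivity
    have f1 := mul_le_mul_of_nonneg_right hAGr hx0.le
    have f2 := mul_le_mul_of_nonneg_right hBGle hy0.le
    have f3 := mul_le_mul_of_nonneg_right hAH hx0.le
    have f4 := mul_nonneg hBH hy0.le
    have f5 : x = 2 * (M * y) := by rw [hxy]; ring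
    have f6 : 0 < M * y := mul_pos hM0 hy0
    have f7 : (2 * (n:ℝ) - 2) * x = (2 * (n:ℝ) - 3) * x + x := by ring
    linarith [f1, f2, f3, f4, f5, f6, f7]
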